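/- Let p₁, p₂ ∈ [0,1] with p₁ > 0, and let k ≥ 1 be an integer. Then the first row of the k-th power of P_BKP satisfies: (P_BKP^k)₀₁ = p₁(1−(−p₁)^k)/(1+p₁) and (P_BKP^k)₀₂ = p₁p₂(1−(−p₁)^(k−1))/(1+p₁). -/

import Mathlib

lemma bkp_aux (p₁ p₂ : ℝ) (h₁ : 0 < p₁) :
    ∀ k : ℕ, 1 ≤ k →
    let P : Matrix (Fin 3) (Fin 3) ℝ :=
      !![1 - p₁, p₁, 0; 1 - p₂, 0, p₂; 1 - p₁, p₁, 0]
    (P ^ k) 0 0 = 1 - p₁ * (1 - (-p₁) ^ k) / (1 + p₁)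
        - p₁ * p₂ * (1 - (-p₁) ^ (k - 1)) / (1 + p₁) ∧
    (P ^ k) 0 1 = p₁ * (1 - (-p₁) ^ k) / (1 + p₁) ∧
    (P ^ k) 0 2 = p₁ * p₂ * (1 - (-p₁) ^ (k - 1)) / (1 + p₁) := by
  intro k hk
  have hne : (1 : ℝ) + p₁ ≠ 0 := by linarith
  induction k, hk using Nat.le_induction with
  | base =>
      refine ⟨?_, ?_, ?_⟩ <;>
      · simp [pow_one, Matrix.cons_val_zero, Matrix.cons_val_one, Matrix.head_cons]
        try field_simp
        try ring
  | succ k hk ih =>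
      obtain ⟨ha, hb, hc⟩ := ih
      have hsub : k + 1 - 1 = k := rfl
      refine ⟨?_, ?_, ?_⟩ <;>
      · rw [pow_succ]
        simp only [Matrix.mul_apply, Fin.sum_univ_three, ha, hb, hc, hsub]
        simp [Matrix.cons_val_zero, Matrix.cons_val_one, Matrix.head_cons]
        field_simp
        all_goals ring_nf
        try (rw [Nat.sub_add_cancel hk]; ring)

/-- Closed form for the first row of powers of the Barrett–Kok transition matrix:
for `p₁ ∈ (0,1]`, `p₂ ∈ [0,1]`, and `k ≥ 1`,
`(P_BKP^k)₀₁ = p₁(1−(−p₁)^k)/(1+p₁)` and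
`(P_BKP^k)₀₂ = p₁p₂(1−(−p₁)^(k−1))/(1+p₁)`. -/
theorem bkp_pow_first_row (p₁ p₂ : ℝ)
    (h₁ : 0 < p₁) (h₁' : p₁ ≤ 1) (h₂ : 0 ≤ p₂) (h₂' : p₂ ≤ 1)
    (k : ℕ) (hk : 1 ≤ k) :
    let P : Matrix (Fin 3) (Fin 3) ℝ :=
      !![1 - p₁, p₁, 0; 1 - p₂, 0, p₂; 1 - p₁, p₁, 0]
    (P ^ k) 0 1 = p₁ * (1 - (-p₁) ^ k) / (1 + p₁) ∧
    (P ^ k) 0 2 = p₁ * p₂ * (1 - (-p₁) ^ (k - 1)) / (1 + p₁) := by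
  obtain ⟨_, hb, hc⟩ := bkp_aux p₁ p₂ h₁ k hk
  exact ⟨hb, hc⟩
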